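/- Let E be a K-algebra generated by x, ∂, ∂₁, ∂₋₁ satisfying ∂_a x - q^a x ∂_a = 1 for a ∈ {-1,0,1} (with ∂₀ = ∂), ∂_a x ∂_b = ∂_b x ∂_a for a ≠ b, and ∂₋₁ ∂₁ = q ∂₁ ∂₋₁. Then (q-1) x ∂₁ ∂₋₁ = ∂₁ - ∂₋₁ and (q-1) ∂₁ ∂₋₁ x = q ∂₁ - q^{-1} ∂₋₁. -/
import Mathlib


/-- In the algebra `E` generated by `x, ∂, ∂₁, ∂₋₁` with the defining relations of
`D_q(K[x])`, one has `(q-1) x ∂₁∂₋₁ = ∂₁ - ∂₋₁` and `(q-1) ∂₁∂₋₁ x = q∂₁ - q⁻¹∂₋₁`. -/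
theorem stmt4 {K E : Type*} [Field K] [CharZero K] [Ring E] [Algebra K E]
    (q : K) (hq0 : q ≠ 0) (hq1 : q ≠ 1)
    (x d0 d1 dm1 : E)
    (h0 : d0 * x - x * d0 = 1)
    (h1 : d1 * x - q • (x * d1) = 1)
    (hm1 : dm1 * x - q⁻¹ • (x * dm1) = 1)
    (h01 : d0 * x * d1 = d1 * x * d0)
    (h0m : d0 * x * dm1 = dm1 * x * d0)
    (h1m : d1 * x * dm1 = dm1 * x * d1)
    (hc : dm1 * d1 = q • (d1 * dm1)) :
    (q - 1) • (x * (d1 * dm1)) = d1 - dm1 ∧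
    (q - 1) • (d1 * dm1 * x) = q • d1 - q⁻¹ • dm1 := by
  have hiq : q⁻¹ * q = 1 := inv_mul_cancel₀ hq0
  have e1 : d1 * x = q • (x * d1) + 1 := by
    rw [← h1]; abel
  have e2 : dm1 * x = q⁻¹ • (x * dm1) + 1 := by
    rw [← hm1]; abel
  have l : d1 * x * dm1 = q • (x * (d1 * dm1)) + dm1 := by
    rw [e1, add_mul, one_mul, smul_mul_assoc, mul_assoc]
  have r : dm1 * x * d1 = x * (d1 * dm1) + d1 := by
    rw [e2, add_mul, one_mul, smul_mul_assoc, mul_assoc, hc, mul_smul_comm, smul_smul, hiq, one_smul]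
  have key : q • (x * (d1 * dm1)) + dm1 = x * (d1 * dm1) + d1 := by
    rw [← l, ← r, h1m]
  have g1 : (q - 1) • (x * (d1 * dm1)) = d1 - dm1 := by
    rw [sub_smul, one_smul, sub_eq_sub_iff_add_eq_add, key, add_comm]
  refine ⟨g1, ?_⟩
  have hY : d1 * dm1 * x = x * (d1 * dm1) + q⁻¹ • dm1 + d1 := by
    rw [mul_assoc, e2, mul_add, mul_one, mul_smul_comm, ← mul_assoc, l, smul_add,
      smul_smul, hiq, one_smul]
  have hco : (q - 1) * q⁻¹ = 1 - q⁻¹ := by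
    rw [sub_mul, mul_inv_cancel₀ hq0, one_mul]
  rw [hY, smul_add, smul_add, g1, smul_smul, hco]
  module
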